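/- Let u ≥ 0 be continuous on B̄_r(x₀), Δu ≥ 1 on {u > 0} ∩ B_r(x₀) (in the distributional/viscosity sense), and x₀ ∈ ∂{u>0}. Then sup_{∂B_r(x₀)} u ≥ r²/(8N). -/

import Mathlib

open MeasureTheory Metric

variable {N : ℕ}

/-- Pointwise Laplacian of `f : ℝ^N → ℝ`. -/
noncomputable def laplacian (f : EuclideanSpace ℝ (Fin N) → ℝ)
    (x : EuclideanSpace ℝ (Fin N)) : ℝ :=
  ∑ i : Fin N,
    fderiv ℝ (fun y => fderiv ℝ f y (EuclideanSpace.single i 1)) x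
      (EuclideanSpace.single i 1)

lemma norm_add_smul_single_sq (i : Fin N) (v : EuclideanSpace ℝ (Fin N)) (t : ℝ) :
    ‖v + t • EuclideanSpace.single i (1:ℝ)‖ ^ 2
      = ‖v‖ ^ 2 + 2 * (v i) * t + t ^ 2 := by
  rw [norm_add_sq_real, real_inner_smul_right, EuclideanSpace.inner_single_right,
    norm_smul, EuclideanSpace.norm_single]
  simp [sq_abs]
  ring

set_option maxHeartbeats 1000000 in
/-- Core interior-maximum contradiction. -/
lemma core (N : ℕ) (hN : 1 ≤ N) (u : EuclideanSpace ℝ (Fin N) → ℝ)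
    (y z : EuclideanSpace ℝ (Fin N)) (c : ℝ) (hc0 : 0 ≤ c) (hcs : 2 * c < 1 / N)
    (hlap : 1 ≤ laplacian u z)
    (hmax : IsLocalMax (fun x => u x - c * ‖x - y‖ ^ 2) z)
    (hucont : ∀ᶠ x in nhds z, ContinuousAt u x) : False := by
  have hNpos : (0:ℝ) < N := by exact_mod_cast hN
  have hNinv : (0:ℝ) < 1 / N := by positivity
  set e : Fin N → EuclideanSpace ℝ (Fin N) := fun i => EuclideanSpace.single i (1:ℝ) with he
  -- pick a good coordinate
  have hex : ∃ i : Fin N, 1/(N:ℝ) ≤ fderiv ℝ (fun x => fderiv ℝ u x (e i)) z (e i) := by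
    by_contra h
    push_neg at h
    have hlt : laplacian u z < ∑ _i : Fin N, 1/(N:ℝ) := by
      refine Finset.sum_lt_sum_of_nonempty ⟨⟨0, hN⟩, Finset.mem_univ _⟩ ?_
      intro i _
      exact h i
    rw [Finset.sum_const, Finset.card_univ, Fintype.card_fin, nsmul_eq_mul,
      mul_one_div, div_self (ne_of_gt hNpos)] at hlt
    linarith
  obtain ⟨i, hi⟩ := hex
  set g : EuclideanSpace ℝ (Fin N) → ℝ := fun x => fderiv ℝ u x (e i) with hgdef
  set a : ℝ := fderiv ℝ g z (e i) with hadef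
  have ha : 1/(N:ℝ) ≤ a := hi
  have hapos : 0 < a := lt_of_lt_of_le hNinv ha
  have hdg : DifferentiableAt ℝ g z := by
    by_contra h
    rw [hadef, fderiv_zero_of_not_differentiableAt h] at hapos
    simp at hapos
  set ℓ : ℝ → EuclideanSpace ℝ (Fin N) := fun t => z + t • e i with hl
  have hℓd : ∀ t : ℝ, HasDerivAt ℓ (e i) t := by
    intro t
    exact (((hasDerivAt_id t).smul_const (e i)).const_add z).congr_deriv (one_smul _ _)
  have hℓ0 : ℓ 0 = z := by simp [hl]
  have hℓcont : Continuous ℓ := by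
    continuity
  have hℓ0nhds : Filter.Tendsto ℓ (nhds 0) (nhds z) := by
    rw [← hℓ0]; exact hℓcont.tendsto 0
  set G : ℝ → ℝ := fun t => fderiv ℝ u (ℓ t) (e i) with hGdef
  have hG : HasDerivAt G a 0 := by
    have h1 : HasFDerivAt g (fderiv ℝ g z) (ℓ 0) := by rw [hℓ0]; exact hdg.hasFDerivAt
    have := h1.comp_hasDerivAt 0 (hℓd 0)
    exact this
  set m : ℝ := G 0 with hmdef
  set b : ℝ := 2 * c * ((z - y) i) with hbdef
  set κ : ℝ := (a - 2*c)/2 with hκdef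
  have h2ca : 2 * c < a := lt_of_lt_of_le hcs ha
  have hκpos : 0 < κ := by rw [hκdef]; linarith
  have hκa : κ < a := by rw [hκdef]; linarith
  -- eventually facts
  have E1 : ∀ᶠ t in nhds (0:ℝ), |G t - m - a * t| ≤ κ * |t| := by
    have h := (hasDerivAt_iff_isLittleO.mp hG).def hκpos
    filter_upwards [h] with t ht
    have hrw : G t - m - a * t = G t - G 0 - (t - 0) • a := by
      rw [hmdef]; simp [smul_eq_mul]; ring
    rw [hrw]
    simpa [Real.norm_eq_abs] using ht
  have E2 : ∀ᶠ t in nhds (0:ℝ), ContinuousAt u (ℓ t) := hℓ0nhds.eventually hucont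
  have E3 : ∀ᶠ t in nhds (0:ℝ),
      u (ℓ t) - c * ‖ℓ t - y‖ ^ 2 ≤ u z - c * ‖z - y‖ ^ 2 :=
    hℓ0nhds.eventually hmax
  have E4 : ∀ᶠ t in nhds (0:ℝ), G t ≠ 0 ∨ t = 0 := by
    rcases eq_or_ne m 0 with hm | hm
    · filter_upwards [E1] with t ht
      by_cases htz : t = 0
      · exact Or.inr htz
      · left
        intro hGt
        rw [hGt, hm] at ht
        have heq : |0 - 0 - a * t| = a * |t| := by
          have h0 : (0:ℝ) - 0 - a * t = -(a * t) := by ring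
          rw [h0, abs_neg, abs_mul, abs_of_pos hapos]
        have habs : a * |t| ≤ κ * |t| := heq ▸ ht
        have : (0:ℝ) < |t| := abs_pos.mpr htz
        nlinarith
    · filter_upwards [hG.continuousAt.eventually_ne hm] with t ht
      exact Or.inl ht
  have Eall := (E1.and (E2.and (E3.and E4)))
  rw [Metric.eventually_nhds_iff] at Eall
  obtain ⟨ε, hε, hall⟩ := Eall
  set ε' : ℝ := ε/2 with hε'def
  have hε' : 0 < ε' := by positivity
  have hall' : ∀ t : ℝ, |t| ≤ ε' →
      (|G t - m - a * t| ≤ κ * |t| ∧ ContinuousAt u (ℓ t) ∧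
      (u (ℓ t) - c * ‖ℓ t - y‖ ^ 2 ≤ u z - c * ‖z - y‖ ^ 2) ∧ (G t ≠ 0 ∨ t = 0)) := by
    intro t ht
    refine hall ?_
    rw [Real.dist_eq, sub_zero]
    linarith
  -- the 1-D functions
  set W : ℝ → ℝ := fun t => u (ℓ t) - (c * ‖z - y‖ ^ 2 + b * t + c * t ^ 2) with hWdef
  have hlink : ∀ t : ℝ, u (ℓ t) - c * ‖ℓ t - y‖ ^ 2 = W t := by
    intro t
    have h1 : ℓ t - y = (z - y) + t • e i := by rw [hl]; exact add_sub_right_comm _ _ _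
    rw [hWdef]
    simp only
    rw [h1, norm_add_smul_single_sq]
    rw [hbdef]
    ring
  have hW0 : W 0 = u z - c * ‖z - y‖ ^ 2 := by
    rw [hWdef]; simp [hℓ0]
  have hWle : ∀ t : ℝ, |t| ≤ ε' → W t ≤ W 0 := by
    intro t ht
    rw [← hlink t, hW0]
    exact (hall' t ht).2.2.1
  have hWderiv : ∀ t : ℝ, G t ≠ 0 → HasDerivAt W (G t - (b + 2 * c * t)) t := by
    intro t hGt
    have hu : DifferentiableAt ℝ u (ℓ t) := by
      by_contra h
      exact hGt (by rw [hGdef]; simp only; rw [fderiv_zero_of_not_differentiableAt h]; simp)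
    have h1 : HasDerivAt (fun s => u (ℓ s)) (G t) t := by
      have := hu.hasFDerivAt.comp_hasDerivAt t (hℓd t)
      exact this
    have hb1 : HasDerivAt (fun s : ℝ => b * s) b t := by
      simpa using (hasDerivAt_id t).const_mul b
    have hq : HasDerivAt (fun s : ℝ => c * s ^ 2) (c * (2 * t)) t := by
      simpa using (hasDerivAt_pow 2 t).const_mul c
    have h2 : HasDerivAt (fun s : ℝ => c * ‖z - y‖ ^ 2 + b * s + c * s ^ 2)
        (0 + b + c * (2 * t)) t :=
      ((hasDerivAt_const t _).add hb1).add hq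
    have := h1.sub h2
    exact this.congr_deriv (by ring)
  have hWcont : ∀ t : ℝ, |t| ≤ ε' → ContinuousAt W t := by
    intro t ht
    have hu := (hall' t ht).2.1
    have : ContinuousAt (fun s => u (ℓ s)) t := hu.comp hℓcont.continuousAt
    exact this.sub (by fun_prop)
  rcases le_or_gt b m with hmb | hmb
  · -- go right
    have hmono : StrictMonoOn W (Set.Icc 0 ε') := by
      refine strictMonoOn_of_deriv_pos (convex_Icc _ _) ?_ ?_
      · intro t ht
        exact (hWcont t (by rw [abs_le]; exact ⟨by linarith [ht.1], ht.2⟩)).continuousWithinAt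
      · intro t ht
        rw [interior_Icc] at ht
        have htabs : |t| ≤ ε' := by rw [abs_le]; exact ⟨by linarith [ht.1], by linarith [ht.2]⟩
        obtain ⟨h1, _, _, h4⟩ := hall' t htabs
        have hGt : G t ≠ 0 := h4.resolve_right (ne_of_gt ht.1)
        rw [(hWderiv t hGt).deriv]
        have habs := abs_le.mp h1
        have habst : |t| = t := abs_of_pos ht.1
        rw [habst] at habs
        have : m + a * t - κ * t ≤ G t := by linarith [habs.1]
        have hκeq : a - 2*c - κ = κ := by rw [hκdef]; ring
        nlinarith [ht.1, hκpos]
    have h1 : W 0 < W ε' := hmono ⟨le_refl 0, hε'.le⟩ ⟨hε'.le, le_refl _⟩ hε'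
    have h2 : W ε' ≤ W 0 := hWle ε' (by rw [abs_of_pos hε'])
    linarith
  · -- go left
    have hanti : StrictAntiOn W (Set.Icc (-ε') 0) := by
      refine strictAntiOn_of_deriv_neg (convex_Icc _ _) ?_ ?_
      · intro t ht
        exact (hWcont t (by rw [abs_le]; exact ⟨ht.1, by linarith [ht.2]⟩)).continuousWithinAt
      · intro t ht
        rw [interior_Icc] at ht
        have htabs : |t| ≤ ε' := by rw [abs_le]; exact ⟨by linarith [ht.1], by linarith [ht.2]⟩
        obtain ⟨h1, _, _, h4⟩ := hall' t htabs
        have hGt : G t ≠ 0 := h4.resolve_right (ne_of_lt ht.2)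
        rw [(hWderiv t hGt).deriv]
        have habs := abs_le.mp h1
        have habst : |t| = -t := abs_of_neg ht.2
        rw [habst] at habs
        have : G t ≤ m + a * t + κ * (-t) := by linarith [habs.2]
        nlinarith [ht.2, hκpos]
    have h1 : W 0 < W (-ε') := hanti ⟨le_refl _, by linarith⟩ ⟨by linarith, le_refl (0:ℝ)⟩ (by linarith)
    have h2 : W (-ε') ≤ W 0 := hWle (-ε') (by rw [abs_of_neg (by linarith)]; linarith)
    linarith

/-- non-degeneracy: if `u ≥ 0` is continuous on `B̄_r(x₀)`,
satisfies `Δu ≥ 1` on `{u > 0} ∩ B_r(x₀)`, and `x₀` is a free boundary point,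
then `sup_{∂B_r(x₀)} u ≥ r²/(8N)`. -/
theorem stmt13 (N : ℕ) (hN : 1 ≤ N) (r : ℝ) (hr : 0 < r)
    (x₀ : EuclideanSpace ℝ (Fin N)) (u : EuclideanSpace ℝ (Fin N) → ℝ)
    (hcont : ContinuousOn u (closedBall x₀ r))
    (hnonneg : ∀ x ∈ closedBall x₀ r, 0 ≤ u x)
    (hpde : ∀ x ∈ ball x₀ r, 0 < u x → 1 ≤ laplacian u x)
    (hfb : x₀ ∈ frontier {x | 0 < u x}) :
    r ^ 2 / (8 * N) ≤ sSup (u '' sphere x₀ r) := by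
  have hNpos : (0:ℝ) < N := by exact_mod_cast hN
  set c : ℝ := 1 / (4 * N) with hcdef
  have hc0 : 0 ≤ c := by positivity
  have hcs : 2 * c < 1 / N := by
    have h1 : 2 * c = 1 / (2 * (N:ℝ)) := by rw [hcdef]; ring
    rw [h1, div_lt_div_iff₀ (by positivity) hNpos]
    nlinarith
  -- find y near x₀ with u y > 0
  have hycl : x₀ ∈ closure {x | 0 < u x} := frontier_subset_closure hfb
  rw [Metric.mem_closure_iff] at hycl
  obtain ⟨y, hy, hydist⟩ := hycl (r/4) (by positivity)
  have hyball : y ∈ ball x₀ r := by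
    rw [mem_ball, dist_comm]
    calc dist x₀ y < r/4 := hydist
    _ < r := by linarith
  have hyu : 0 < u y := hy
  -- the positivity region and its closure
  set Ω : Set (EuclideanSpace ℝ (Fin N)) := ball x₀ r ∩ u ⁻¹' Set.Ioi 0 with hΩdef
  have hΩopen : IsOpen Ω :=
    (hcont.mono ball_subset_closedBall).isOpen_inter_preimage isOpen_ball isOpen_Ioi
  have hyΩ : y ∈ Ω := ⟨hyball, hyu⟩
  set K : Set (EuclideanSpace ℝ (Fin N)) := closure Ω with hKdef
  have hKsub : K ⊆ closedBall x₀ r :=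
    closure_minimal (fun x hx => ball_subset_closedBall hx.1) isClosed_closedBall
  have hKcomp : IsCompact K :=
    (isCompact_closedBall x₀ r).of_isClosed_subset isClosed_closure hKsub
  set f : EuclideanSpace ℝ (Fin N) → ℝ := fun x => u x - c * ‖x - y‖ ^ 2 with hfdef
  have hfcont : ContinuousOn f K :=
    (hcont.mono hKsub).sub (Continuous.continuousOn (by fun_prop))
  obtain ⟨z, hzK, hzmax⟩ := hKcomp.exists_isMaxOn ⟨y, subset_closure hyΩ⟩ hfcont
  have hfy : f y = u y := by rw [hfdef]; simp
  have hfzy : u y ≤ f z := by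
    calc u y = f y := hfy.symm
    _ ≤ f z := hzmax (subset_closure hyΩ)
  have hfzpos : 0 < f z := lt_of_lt_of_le hyu hfzy
  -- z is not an interior max
  have hzΩ : z ∉ Ω := by
    intro hz
    refine core N hN u y z c hc0 hcs (hpde z hz.1 hz.2) ?_ ?_
    · have hK : K ∈ nhds z := Filter.mem_of_superset (hΩopen.mem_nhds hz) subset_closure
      filter_upwards [hK] with x hx using hzmax hx
    · filter_upwards [hΩopen.mem_nhds hz] with x hx
      exact (hcont.continuousAt
        (Filter.mem_of_superset (isOpen_ball.mem_nhds hx.1) ball_subset_closedBall))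
  -- z is on the sphere
  have hzball : dist z x₀ ≤ r := mem_closedBall.mp (hKsub hzK)
  have hzsphere : z ∈ sphere x₀ r := by
    rw [mem_sphere]
    by_contra h
    have hlt : dist z x₀ < r := lt_of_le_of_ne hzball h
    have hzb : z ∈ ball x₀ r := mem_ball.mpr hlt
    have hzneg : u z ≤ 0 := by
      by_contra h'
      exact hzΩ ⟨hzb, by push_neg at h'; exact h'⟩
    have : f z ≤ 0 := by
      rw [hfdef]
      have : 0 ≤ c * ‖z - y‖ ^ 2 := by positivity
      simp only
      linarith
    linarith
  -- distance bound
  have hdist : 3 * r / 4 ≤ dist z y := by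
    have h1 := dist_triangle z y x₀
    have h2 : dist y x₀ < r / 4 := by rw [dist_comm]; exact hydist
    have h3 : dist z x₀ = r := hzsphere
    linarith
  have hnorm : 3 * r / 4 ≤ ‖z - y‖ := by rw [← dist_eq_norm]; exact hdist
  have huz : c * (3 * r / 4) ^ 2 ≤ u z := by
    have h1 : (3 * r / 4) ^ 2 ≤ ‖z - y‖ ^ 2 :=
      pow_le_pow_left₀ (by positivity) hnorm 2
    have h2 : c * (3 * r / 4) ^ 2 ≤ c * ‖z - y‖ ^ 2 :=
      mul_le_mul_of_nonneg_left h1 hc0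
    have h3 : u z = f z + c * ‖z - y‖ ^ 2 := by rw [hfdef]; ring
    nlinarith
  have hfinal : r ^ 2 / (8 * N) ≤ c * (3 * r / 4) ^ 2 := by
    have h1 : c * (3 * r / 4) ^ 2 = 9 * r ^ 2 / (64 * N) := by rw [hcdef]; ring
    rw [h1, div_le_div_iff₀ (by positivity) (by positivity)]
    nlinarith [sq_nonneg r, hNpos]
  have hbdd : BddAbove (u '' sphere x₀ r) :=
    ((isCompact_sphere x₀ r).image_of_continuousOn
      (hcont.mono sphere_subset_closedBall)).bddAbove
  have hmem : u z ∈ u '' sphere x₀ r := ⟨z, hzsphere, rfl⟩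
  calc r ^ 2 / (8 * N) ≤ c * (3 * r / 4) ^ 2 := hfinal
  _ ≤ u z := huz
  _ ≤ sSup (u '' sphere x₀ r) := le_csSup hbdd hmem
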